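/- For n ≥ 1 agents with additive valuations whose item values lie in [0,1], there exists an allocation A and a payment vector p such that the pair (A, p) is envy-free and the total subsidy satisfies ∑_{i} p i ≤ n − 1. -/

import Mathlib

open Finset

namespace SubsidyProof

variable {n m : ℕ}

/-- value of an optional item -/
def oval (v : Fin n → Fin m → ℝ) (i : Fin n) : Option (Fin m) → ℝ
  | none => 0
  | some j => v i j

lemma oval_nonneg {v : Fin n → Fin m → ℝ} (hv0 : ∀ i j, 0 ≤ v i j) (i : Fin n)
    (o : Option (Fin m)) : 0 ≤ oval v i o := by
  cases o with
  | none => simp [oval]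
  | some j => simpa [oval] using hv0 i j

lemma oval_le_one {v : Fin n → Fin m → ℝ} (hv1 : ∀ i j, v i j ≤ 1) (i : Fin n)
    (o : Option (Fin m)) : oval v i o ≤ 1 := by
  cases o with
  | none => simp [oval]
  | some j => simpa [oval] using hv1 i j

/-- total weight of a partial assignment -/
def mwt (v : Fin n → Fin m → ℝ) (f : Fin n → Option (Fin m)) : ℝ := ∑ i, oval v i (f i)

def IsMatching (R : Finset (Fin m)) (f : Fin n → Option (Fin m)) : Prop :=
  (∀ i j, f i = some j → j ∈ R) ∧ ∀ i₁ i₂ j, f i₁ = some j → f i₂ = some j → i₁ = i₂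

/-- the set of matched items -/
def mset (f : Fin n → Option (Fin m)) : Finset (Fin m) :=
  Finset.univ.biUnion (fun i => (f i).toFinset)

lemma mem_mset {f : Fin n → Option (Fin m)} {j : Fin m} :
    j ∈ mset f ↔ ∃ i, f i = some j := by
  simp [mset, Option.mem_toFinset, eq_comm, Option.mem_def]

lemma exists_phase (v : Fin n → Fin m → ℝ) (hv0 : ∀ i j, 0 ≤ v i j) (hn : 0 < n)
    (R : Finset (Fin m)) :
    ∃ f, IsMatching R f ∧ (∀ g, IsMatching R g → mwt v g ≤ mwt v f) ∧
      (R.Nonempty → ∃ i j, f i = some j) := by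
  classical
  set S : Finset (Fin n → Option (Fin m)) := Finset.univ.filter (IsMatching R) with hS
  have hne : S.Nonempty := by
    refine ⟨fun _ => none, ?_⟩
    simp [hS, IsMatching]
  obtain ⟨f0, hf0S, hf0max⟩ := S.exists_max_image (mwt v) hne
  have hf0 : IsMatching R f0 := by simpa [hS] using hf0S
  have hmax : ∀ g, IsMatching R g → mwt v g ≤ mwt v f0 := by
    intro g hg; exact hf0max g (by simpa [hS] using hg)
  by_cases hp : ∃ i j, f0 i = some j
  · exact ⟨f0, hf0, hmax, fun _ => hp⟩
  · -- f0 is all-none; replace by a single-pair matching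
    push_neg at hp
    have hf0none : f0 = fun _ => none := by
      funext i; cases h : f0 i with
      | none => rfl
      | some j => exact absurd h (hp i j)
    refine ?_
    by_cases hR : R.Nonempty
    · obtain ⟨j0, hj0⟩ := hR
      set i0 : Fin n := ⟨0, hn⟩
      set f1 : Fin n → Option (Fin m) := Function.update (fun _ => none) i0 (some j0) with hf1
      have hf1m : IsMatching R f1 := by
        constructor
        · intro i j hij
          by_cases hi : i = i0
          · subst hi
            simp [hf1, Function.update_self] at hij
            subst hij; exact hj0
          · simp [hf1, Function.update_of_ne hi] at hij
        · intro i1 i2 j h1 h2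
          by_cases hi1 : i1 = i0 <;> by_cases hi2 : i2 = i0
          · subst hi1; subst hi2; rfl
          · simp [hf1, Function.update_of_ne hi2] at h2
          · simp [hf1, Function.update_of_ne hi1] at h1
          · simp [hf1, Function.update_of_ne hi1] at h1
      have h10 : mwt v f1 ≤ mwt v f0 := hmax f1 hf1m
      have h01 : mwt v f0 ≤ mwt v f1 := by
        have h0 : mwt v f0 = 0 := by
          simp [mwt, hf0none, oval]
        rw [h0]
        unfold mwt
        refine Finset.sum_nonneg (fun i _ => oval_nonneg hv0 _ _)
      have heq : mwt v f1 = mwt v f0 := le_antisymm h10 h01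
      refine ⟨f1, hf1m, fun g hg => heq ▸ hmax g hg, fun _ => ⟨i0, j0, ?_⟩⟩
      simp [hf1, Function.update_self]
    · exact ⟨f0, hf0, hmax, fun h => absurd h hR⟩


section Alloc


variable (v : Fin n → Fin m → ℝ) (hv0 : ∀ i j, 0 ≤ v i j) (hn : 0 < n)

noncomputable def phF (R : Finset (Fin m)) : Fin n → Option (Fin m) :=
  (exists_phase v hv0 hn R).choose

lemma phF_matching (R : Finset (Fin m)) : IsMatching R (phF v hv0 hn R) :=
  (exists_phase v hv0 hn R).choose_spec.1

lemma phF_max (R : Finset (Fin m)) :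
    ∀ g, IsMatching R g → mwt v g ≤ mwt v (phF v hv0 hn R) :=
  (exists_phase v hv0 hn R).choose_spec.2.1

lemma phF_pair (R : Finset (Fin m)) (hR : R.Nonempty) :
    ∃ i j, phF v hv0 hn R i = some j :=
  (exists_phase v hv0 hn R).choose_spec.2.2 hR

noncomputable def allocF : ℕ → Finset (Fin m) → Fin n → Finset (Fin m)
  | 0, _, _ => ∅
  | (N+1), R, i =>
      if R.Nonempty then
        (phF v hv0 hn R i).toFinset ∪
          allocF N (R \ mset (phF v hv0 hn R)) i
      else ∅

lemma allocF_subset : ∀ (N : ℕ) (R : Finset (Fin m)) (i : Fin n), allocF v hv0 hn N R i ⊆ R := by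
  intro N
  induction N with
  | zero => intro R i; simp [allocF]
  | succ N ih =>
    intro R i
    by_cases hR : R.Nonempty
    · rw [allocF, if_pos hR]
      apply Finset.union_subset
      · intro j hj
        rw [Option.mem_toFinset, Option.mem_def] at hj
        exact (phF_matching v hv0 hn R).1 i j hj
      · exact (ih _ i).trans (Finset.sdiff_subset)
    · rw [allocF, if_neg hR]; simp

lemma allocF_disjoint : ∀ (N : ℕ) (R : Finset (Fin m)) (i k : Fin n), i ≠ k →
    Disjoint (allocF v hv0 hn N R i) (allocF v hv0 hn N R k) := by
  intro N
  induction N with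
  | zero => intro R i k _; simp [allocF]
  | succ N ih =>
    intro R i k hik
    by_cases hR : R.Nonempty
    · rw [allocF, if_pos hR, allocF, if_pos hR]
      set f := phF v hv0 hn R with hf
      rw [Finset.disjoint_left]
      intro j hj hj'
      rw [Finset.mem_union] at hj hj'
      have hsub : ∀ a, allocF v hv0 hn N (R \ mset f) a ⊆ R \ mset f := fun a => allocF_subset v hv0 hn N _ a
      rcases hj with hj | hj <;> rcases hj' with hj' | hj'
      · rw [Option.mem_toFinset, Option.mem_def] at hj hj'
        exact hik ((phF_matching v hv0 hn R).2 i k j hj hj')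
      · have : j ∈ mset f := mem_mset.mpr ⟨i, by rwa [Option.mem_toFinset, Option.mem_def] at hj⟩
        have := (hsub k hj')
        simp [Finset.mem_sdiff] at this
        exact this.2 ‹j ∈ mset f›
      · have : j ∈ mset f := mem_mset.mpr ⟨k, by rwa [Option.mem_toFinset, Option.mem_def] at hj'⟩
        have := (hsub i hj)
        simp [Finset.mem_sdiff] at this
        exact this.2 ‹j ∈ mset f›
      · exact (Finset.disjoint_left.mp (ih _ i k hik)) hj hj'
    · have h1 : allocF v hv0 hn (N+1) R i = ∅ := by rw [allocF, if_neg hR]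
      have h2 : allocF v hv0 hn (N+1) R k = ∅ := by rw [allocF, if_neg hR]
      simp [h1, h2]

lemma allocF_cover : ∀ (N : ℕ) (R : Finset (Fin m)), R.card ≤ N →
    Finset.univ.biUnion (allocF v hv0 hn N R) = R := by
  intro N
  induction N with
  | zero =>
    intro R hR
    have : R = ∅ := Finset.card_eq_zero.mp (Nat.le_zero.mp hR)
    subst this
    have : allocF v hv0 hn 0 = fun (_ : Finset (Fin m)) (_ : Fin n) => (∅ : Finset (Fin m)) := rfl
    rw [this]
    ext j; simp
  | succ N ih =>
    intro R hR
    by_cases hRne : R.Nonempty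
    · set f := phF v hv0 hn R with hf
      have hcard : (R \ mset f).card ≤ N := by
        obtain ⟨i0, j0, hij⟩ := phF_pair v hv0 hn R hRne
        have hj0R : j0 ∈ R := (phF_matching v hv0 hn R).1 i0 j0 hij
        have hj0m : j0 ∈ mset f := mem_mset.mpr ⟨i0, hij⟩
        have hss : R \ mset f ⊂ R := by
          refine Finset.ssubset_iff_of_subset Finset.sdiff_subset |>.mpr ?_
          exact ⟨j0, hj0R, by simp [Finset.mem_sdiff, hj0m]⟩
        have := Finset.card_lt_card hss
        omega
      have hrec := ih _ hcard
      have hdef : allocF v hv0 hn (N+1) R = fun i =>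
          (f i).toFinset ∪ allocF v hv0 hn N (R \ mset f) i := by
        funext i; rw [allocF, if_pos hRne]
      have hbu : Finset.univ.biUnion (allocF v hv0 hn (N+1) R)
          = mset f ∪ (R \ mset f) := by
        rw [hdef]
        ext j
        simp only [Finset.mem_biUnion, Finset.mem_union, Finset.mem_univ, true_and]
        constructor
        · rintro ⟨i, hi | hi⟩
          · exact Or.inl (Finset.mem_biUnion.mpr ⟨i, Finset.mem_univ i, hi⟩)
          · exact Or.inr (by rw [← hrec]; exact Finset.mem_biUnion.mpr ⟨i, Finset.mem_univ i, hi⟩)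
        · rintro (hj | hj)
          · obtain ⟨i, hi⟩ := mem_mset.mp hj
            exact ⟨i, Or.inl (by simp [Option.mem_toFinset, Option.mem_def, hi])⟩
          · rw [← hrec] at hj
            obtain ⟨i, _, hi⟩ := Finset.mem_biUnion.mp hj
            exact ⟨i, Or.inr hi⟩
      rw [hbu]
      have : mset f ⊆ R := by
        intro j hj
        obtain ⟨i, hi⟩ := mem_mset.mp hj
        exact (phF_matching v hv0 hn R).1 i j hi
      rw [Finset.union_sdiff_of_subset this]
    · have hRe : R = ∅ := Finset.not_nonempty_iff_eq_empty.mp hRne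
      have hdef : allocF v hv0 hn (N+1) R = fun _ => (∅ : Finset (Fin m)) := by
        funext i; rw [allocF, if_neg hRne]
      rw [hdef, hRe]
      ext j; simp

end Alloc

/-- path weight along a list -/
def pW (E : Fin n → Fin n → ℝ) : List (Fin n) → ℝ
  | (a :: b :: L) => E a b + pW E (b :: L)
  | _ => 0

lemma pW_nil (E : Fin n → Fin n → ℝ) : pW E [] = 0 := rfl
lemma pW_single (E : Fin n → Fin n → ℝ) (a : Fin n) : pW E [a] = 0 := rfl
lemma pW_cons (E : Fin n → Fin n → ℝ) (a b : Fin n) (L : List (Fin n)) :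
    pW E (a :: b :: L) = E a b + pW E (b :: L) := rfl

lemma pW_zero (L : List (Fin n)) : pW (fun _ _ => (0:ℝ)) L = 0 := by
  induction L with
  | nil => rfl
  | cons a L ih =>
    cases L with
    | nil => rfl
    | cons b L' => rw [pW_cons, ih]; ring

lemma pW_congr {E E' : Fin n → Fin n → ℝ} (h : ∀ i k, E i k = E' i k) (L : List (Fin n)) :
    pW E L = pW E' L := by
  induction L with
  | nil => rfl
  | cons a L ih =>
    cases L with
    | nil => rfl
    | cons b L' => rw [pW_cons, pW_cons, h, ih]

lemma pW_add (E E' : Fin n → Fin n → ℝ) (L : List (Fin n)) :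
    pW (fun i k => E i k + E' i k) L = pW E L + pW E' L := by
  induction L with
  | nil => simp [pW_nil]
  | cons a L ih =>
    cases L with
    | nil => simp [pW_single]
    | cons b L' => rw [pW_cons, pW_cons, pW_cons, ih]; ring

lemma pW_append_last (E : Fin n → Fin n → ℝ) (x : Fin n) :
    ∀ (L : List (Fin n)) (a : Fin n),
      pW E ((a :: L) ++ [x]) = pW E (a :: L) + E ((a :: L).getLast (by simp)) x := by
  intro L
  induction L with
  | nil => intro a; simp [pW_cons, pW_single, pW_nil]
  | cons b L' ih =>
    intro a
    have : (a :: b :: L') ++ [x] = a :: ((b :: L') ++ [x]) := rfl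
    rw [this, show a :: ((b :: L') ++ [x]) = a :: b :: (L' ++ [x]) from rfl, pW_cons,
      show b :: (L' ++ [x]) = (b :: L') ++ [x] from rfl, ih b, List.getLast_cons_cons, pW_cons]
    ring

lemma pW_split (E : Fin n → Fin n → ℝ) :
    ∀ (X : List (Fin n)) (a : Fin n) (Y : List (Fin n)),
      pW E (X ++ a :: Y) = pW E (X ++ [a]) + pW E (a :: Y) := by
  intro X
  induction X with
  | nil => intro a Y; simp [pW_single]
  | cons x X' ih =>
    intro a Y
    cases X' with
    | nil =>
      simp only [List.cons_append, List.nil_append]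
      rw [pW_cons, pW_cons, pW_single]
      ring
    | cons x' X'' =>
      simp only [List.cons_append]
      rw [pW_cons, pW_cons]
      have := ih a Y
      simp only [List.cons_append] at this
      rw [this]
      ring

/-- shift assignment along a list: each element of the list takes the `f`-item of the
next element, the last element takes `o`. -/
def shiftA (f : Fin n → Option (Fin m)) (o : Option (Fin m)) : List (Fin n) → (Fin n → Option (Fin m))
  | [] => f
  | [a] => Function.update f a o
  | a :: b :: L => Function.update (shiftA f o (b :: L)) a (f b)

lemma shiftA_notMem (f : Fin n → Option (Fin m)) (o : Option (Fin m)) :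
    ∀ (L : List (Fin n)) (x : Fin n), x ∉ L → shiftA f o L x = f x := by
  intro L
  induction L with
  | nil => intro x _; rfl
  | cons a L ih =>
    intro x hx
    simp only [List.mem_cons, not_or] at hx
    cases L with
    | nil => rw [shiftA, Function.update_of_ne hx.1]
    | cons b L' =>
      rw [shiftA, Function.update_of_ne hx.1]
      exact ih x hx.2

lemma mwt_update (v : Fin n → Fin m → ℝ) (h : Fin n → Option (Fin m)) (a : Fin n)
    (o : Option (Fin m)) :
    mwt v (Function.update h a o) = mwt v h + oval v a o - oval v a (h a) := by
  unfold mwt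
  rw [← Finset.add_sum_erase _ _ (Finset.mem_univ a),
      ← Finset.add_sum_erase _ (fun i => oval v i (h i)) (Finset.mem_univ a)]
  rw [Function.update_self]
  have : ∑ i ∈ Finset.univ.erase a, oval v i (Function.update h a o i)
      = ∑ i ∈ Finset.univ.erase a, oval v i (h i) := by
    apply Finset.sum_congr rfl
    intro i hi
    rw [Function.update_of_ne (Finset.ne_of_mem_erase hi)]
  rw [this]
  ring

lemma shiftA_mwt (v : Fin n → Fin m → ℝ) (f : Fin n → Option (Fin m)) (o : Option (Fin m)) :
    ∀ (L : List (Fin n)) (a : Fin n), (a :: L).Nodup →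
      mwt v (shiftA f o (a :: L)) = mwt v f
        + pW (fun i k => oval v i (f k) - oval v i (f i)) (a :: L)
        + oval v ((a :: L).getLast (by simp)) o
        - oval v ((a :: L).getLast (by simp)) (f ((a :: L).getLast (by simp))) := by
  intro L
  induction L with
  | nil =>
    intro a _
    rw [show shiftA f o [a] = Function.update f a o from rfl, mwt_update]
    simp [pW_single]
  | cons b L' ih =>
    intro a hnd
    have hanb : a ∉ b :: L' := (List.nodup_cons.mp hnd).1
    have hnd' : (b :: L').Nodup := (List.nodup_cons.mp hnd).2
    rw [show shiftA f o (a :: b :: L') = Function.update (shiftA f o (b :: L')) a (f b) from rfl,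
      mwt_update, shiftA_notMem f o _ a hanb, ih b hnd', List.getLast_cons_cons, pW_cons]
    ring

end SubsidyProof

namespace SubsidyProof
variable {n m : ℕ}

lemma shiftA_zip (f : Fin n → Option (Fin m)) (o : Option (Fin m)) :
    ∀ (L : List (Fin n)), L.Nodup → ∀ x y, (x, y) ∈ L.zip L.tail → shiftA f o L x = f y := by
  intro L
  induction L with
  | nil => intro _ x y h; simp at h
  | cons a L ih =>
    intro hnd x y hxy
    cases L with
    | nil => simp at hxy
    | cons b L' =>
      have hzip : (a :: b :: L').zip (a :: b :: L').tail
          = (a, b) :: ((b :: L').zip (b :: L').tail) := rfl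
      rw [hzip, List.mem_cons] at hxy
      rcases hxy with h | h
      · rw [Prod.ext_iff] at h
        simp only at h
        rw [h.1, h.2, shiftA, Function.update_self]
      · have hxmem : x ∈ b :: L' := (List.of_mem_zip h).1
        have hxa : x ≠ a := by
          rintro rfl
          exact (List.nodup_cons.mp hnd).1 hxmem
        rw [shiftA, Function.update_of_ne hxa]
        exact ih (List.nodup_cons.mp hnd).2 x y h

lemma shiftA_last (f : Fin n → Option (Fin m)) (o : Option (Fin m)) :
    ∀ (L : List (Fin n)) (a : Fin n), (a :: L).Nodup →
      shiftA f o (a :: L) ((a :: L).getLast (by simp)) = o := by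
  intro L
  induction L with
  | nil => intro a _; rw [show ([a] : List (Fin n)).getLast (by simp) = a from rfl, shiftA,
      Function.update_self]
  | cons b L' ih =>
    intro a hnd
    rw [List.getLast_cons_cons]
    have hmem : (b :: L').getLast (by simp) ∈ b :: L' := List.getLast_mem _
    have hne : (b :: L').getLast (by simp) ≠ a := by
      rintro h
      exact (List.nodup_cons.mp hnd).1 (h ▸ hmem)
    rw [shiftA, Function.update_of_ne hne]
    exact ih b (List.nodup_cons.mp hnd).2

lemma zip_exists (L : List (Fin n)) :
    ∀ (a x : Fin n), x ∈ a :: L → x ≠ (a :: L).getLast (by simp) →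
      ∃ y, (x, y) ∈ (a :: L).zip L := by
  induction L with
  | nil =>
    intro a x hx hne
    simp at hx
    exact absurd (by simp [hx]) hne
  | cons b L' ih =>
    intro a x hx hne
    rw [List.getLast_cons_cons] at hne
    rcases List.mem_cons.mp hx with rfl | hx'
    · exact ⟨b, by simp [List.zip]⟩
    · obtain ⟨y, hy⟩ := ih b x hx' hne
      refine ⟨y, ?_⟩
      rw [show (a :: b :: L').zip (b :: L') = (a, b) :: ((b :: L').zip L') from rfl]
      exact List.mem_cons_of_mem _ hy

lemma zip_inj (L : List (Fin n)) :
    ∀ (a : Fin n), (a :: L).Nodup → ∀ x₁ x₂ y, (x₁, y) ∈ (a :: L).zip L →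
      (x₂, y) ∈ (a :: L).zip L → x₁ = x₂ := by
  induction L with
  | nil => intro a _ x₁ x₂ y h; simp at h
  | cons b L' ih =>
    intro a hnd x₁ x₂ y h₁ h₂
    have hzip : (a :: b :: L').zip (b :: L') = (a, b) :: ((b :: L').zip L') := rfl
    rw [hzip, List.mem_cons] at h₁ h₂
    have hbL' : b ∉ L' := (List.nodup_cons.mp (List.nodup_cons.mp hnd).2).1
    rcases h₁ with h₁ | h₁ <;> rcases h₂ with h₂ | h₂
    · rw [Prod.ext_iff] at h₁ h₂; simp at h₁ h₂; rw [h₁.1, h₂.1]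
    · rw [Prod.ext_iff] at h₁; simp at h₁
      have : y ∈ L' := (List.of_mem_zip h₂).2
      exact absurd (h₁.2 ▸ this) hbL'
    · rw [Prod.ext_iff] at h₂; simp at h₂
      have : y ∈ L' := (List.of_mem_zip h₁).2
      exact absurd (h₂.2 ▸ this) hbL'
    · exact ih b (List.nodup_cons.mp hnd).2 x₁ x₂ y h₁ h₂

/-- classification of the sources of values of `shiftA` -/
lemma shiftA_src (f : Fin n → Option (Fin m)) (o : Option (Fin m))
    (L : List (Fin n)) (a : Fin n) (hnd : (a :: L).Nodup) (x : Fin n) (j : Fin m)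
    (hx : shiftA f o (a :: L) x = some j) :
    (x ∉ a :: L ∧ f x = some j) ∨
    (x = (a :: L).getLast (by simp) ∧ o = some j) ∨
    (∃ y, (x, y) ∈ (a :: L).zip L ∧ f y = some j) := by
  by_cases hmem : x ∈ a :: L
  · by_cases hlast : x = (a :: L).getLast (by simp)
    · refine Or.inr (Or.inl ⟨hlast, ?_⟩)
      rw [hlast] at hx
      rw [shiftA_last f o L a hnd] at hx
      exact hx
    · obtain ⟨y, hy⟩ := zip_exists L a x hmem hlast
      refine Or.inr (Or.inr ⟨y, hy, ?_⟩)
      rw [shiftA_zip f o (a :: L) hnd x y (by exact hy)] at hx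
      exact hx
  · left
    rw [shiftA_notMem f o _ x hmem] at hx
    exact ⟨hmem, hx⟩

end SubsidyProof

namespace SubsidyProof
variable {n m : ℕ}

/-- the shifted assignment is again a matching, provided the extra item `o` is in `R`
and can only collide with the `f`-item of the head. -/
lemma shiftA_matching (f : Fin n → Option (Fin m)) (o : Option (Fin m))
    (R : Finset (Fin m)) (hf : IsMatching R f)
    (L : List (Fin n)) (a : Fin n) (hnd : (a :: L).Nodup)
    (ho_mem : ∀ j, o = some j → j ∈ R)
    (ho : ∀ j, o = some j → ∀ y, f y = some j → y = a) :
    IsMatching R (shiftA f o (a :: L)) := by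
  have hnotmem_a : a ∉ L := (List.nodup_cons.mp hnd).1
  constructor
  · intro x j hx
    rcases shiftA_src f o L a hnd x j hx with ⟨_, h⟩ | ⟨_, h⟩ | ⟨y, _, h⟩
    · exact hf.1 x j h
    · exact ho_mem j h
    · exact hf.1 y j h
  · intro x₁ x₂ j h₁ h₂
    by_contra hne
    rcases shiftA_src f o L a hnd x₁ j h₁ with ⟨hm₁, hs₁⟩ | ⟨hl₁, hs₁⟩ | ⟨y₁, hz₁, hs₁⟩ <;>
      rcases shiftA_src f o L a hnd x₂ j h₂ with ⟨hm₂, hs₂⟩ | ⟨hl₂, hs₂⟩ | ⟨y₂, hz₂, hs₂⟩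
    · exact hne (hf.2 x₁ x₂ j hs₁ hs₂)
    · exact hm₁ ((ho j hs₂ x₁ hs₁) ▸ List.mem_cons_self)
    · have : x₁ = y₂ := hf.2 x₁ y₂ j hs₁ hs₂
      have hy₂ : y₂ ∈ L := (List.of_mem_zip hz₂).2
      exact hm₁ (this ▸ List.mem_cons_of_mem a hy₂)
    · exact hm₂ ((ho j hs₁ x₂ hs₂) ▸ List.mem_cons_self)
    · exact hne (hl₁.trans hl₂.symm)
    · have : y₂ = a := ho j hs₁ y₂ hs₂
      have hy₂ : y₂ ∈ L := (List.of_mem_zip hz₂).2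
      exact hnotmem_a (this ▸ hy₂)
    · have : x₂ = y₁ := hf.2 x₂ y₁ j hs₂ hs₁
      have hy₁ : y₁ ∈ L := (List.of_mem_zip hz₁).2
      exact hm₂ (this ▸ List.mem_cons_of_mem a hy₁)
    · have : y₁ = a := ho j hs₂ y₁ hs₁
      have hy₁ : y₁ ∈ L := (List.of_mem_zip hz₁).2
      exact hnotmem_a (this ▸ hy₁)
    · have : y₁ = y₂ := hf.2 y₁ y₂ j hs₁ hs₂
      exact hne (zip_inj L a hnd x₁ x₂ y₁ hz₁ (this ▸ hz₂))

section Bounds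

variable (v : Fin n → Fin m → ℝ) (hv0 : ∀ i j, 0 ≤ v i j) (hn : 0 < n)

/-- cyclic exchange inequality: along any simple cycle, the total envy
w.r.t. a maximum-weight matching is nonpositive. -/
lemma cyc_bound (R : Finset (Fin m)) (L : List (Fin n)) (a : Fin n)
    (hnd : (a :: L).Nodup) :
    pW (fun i k => oval v i (phF v hv0 hn R k) - oval v i (phF v hv0 hn R i)) ((a :: L) ++ [a]) ≤ 0 := by
  set f := phF v hv0 hn R with hf
  have hfm : IsMatching R f := phF_matching v hv0 hn R
  have hg : IsMatching R (shiftA f (f a) (a :: L)) := by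
    apply shiftA_matching f (f a) R hfm L a hnd
    · intro j hj; exact hfm.1 a j hj
    · intro j hj y hy; exact hfm.2 y a j hy hj
  have hle : mwt v (shiftA f (f a) (a :: L)) ≤ mwt v f := phF_max v hv0 hn R _ hg
  rw [shiftA_mwt v f (f a) L a hnd] at hle
  rw [pW_append_last]
  set ℓ := (a :: L).getLast (by simp)
  have : pW (fun i k => oval v i (f k) - oval v i (f i)) (a :: L)
      + (oval v ℓ (f a) - oval v ℓ (f ℓ)) ≤ 0 := by linarith
  simpa using this

/-- path exchange inequality: along any simple path, total envy is at most the
value of the last agent's matched item minus the value of a "fresh" item `o`. -/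
lemma path_bound (R : Finset (Fin m)) (L : List (Fin n)) (a : Fin n)
    (hnd : (a :: L).Nodup) (o : Option (Fin m))
    (ho_mem : ∀ j, o = some j → j ∈ R)
    (ho_new : ∀ j, o = some j → ∀ y, phF v hv0 hn R y ≠ some j) :
    pW (fun i k => oval v i (phF v hv0 hn R k) - oval v i (phF v hv0 hn R i)) (a :: L)
      ≤ oval v ((a :: L).getLast (by simp)) (phF v hv0 hn R ((a :: L).getLast (by simp)))
        - oval v ((a :: L).getLast (by simp)) o := by
  set f := phF v hv0 hn R with hf
  have hfm : IsMatching R f := phF_matching v hv0 hn R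
  have hg : IsMatching R (shiftA f o (a :: L)) := by
    apply shiftA_matching f o R hfm L a hnd ho_mem
    · intro j hj y hy; exact absurd hy (ho_new j hj y)
  have hle : mwt v (shiftA f o (a :: L)) ≤ mwt v f := phF_max v hv0 hn R _ hg
  rw [shiftA_mwt v f o L a hnd] at hle
  linarith

end Bounds
end SubsidyProof

namespace SubsidyProof
variable {n m : ℕ}

section Main

variable (v : Fin n → Fin m → ℝ) (hv0 : ∀ i j, 0 ≤ v i j) (hn : 0 < n)

/-- envy edge weights for the allocation with fuel `N` on item pool `R` -/
noncomputable def eN (N : ℕ) (R : Finset (Fin m)) (i k : Fin n) : ℝ :=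
  (∑ j ∈ allocF v hv0 hn N R k, v i j) - (∑ j ∈ allocF v hv0 hn N R i, v i j)

lemma sum_toFinset_oval (i : Fin n) (o : Option (Fin m)) :
    (∑ j ∈ o.toFinset, v i j) = oval v i o := by
  cases o with
  | none => simp [oval]
  | some j => simp [oval]

lemma eN_decomp (N : ℕ) (R : Finset (Fin m)) (hR : R.Nonempty) (i k : Fin n) :
    eN v hv0 hn (N+1) R i k
      = (oval v i (phF v hv0 hn R k) - oval v i (phF v hv0 hn R i))
        + eN v hv0 hn N (R \ mset (phF v hv0 hn R)) i k := by
  set f := phF v hv0 hn R with hf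
  have hsum : ∀ i' k' : Fin n, (∑ j ∈ allocF v hv0 hn (N+1) R k', v i' j)
      = oval v i' (f k') + ∑ j ∈ allocF v hv0 hn N (R \ mset f) k', v i' j := by
    intro i' k'
    have hdef : allocF v hv0 hn (N+1) R k'
        = (f k').toFinset ∪ allocF v hv0 hn N (R \ mset f) k' := by
      rw [allocF, if_pos hR]
    have hdisj : Disjoint ((f k').toFinset) (allocF v hv0 hn N (R \ mset f) k') := by
      rw [Finset.disjoint_left]
      intro j hj hj'
      have hjm : j ∈ mset f := mem_mset.mpr ⟨k', by rwa [Option.mem_toFinset, Option.mem_def] at hj⟩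
      have := allocF_subset v hv0 hn N (R \ mset f) k' hj'
      rw [Finset.mem_sdiff] at this
      exact this.2 hjm
    rw [hdef, Finset.sum_union hdisj, sum_toFinset_oval]
  unfold eN
  rw [hsum i k, hsum i i]
  ring

lemma eN_zero_fuel (R : Finset (Fin m)) (i k : Fin n) : eN v hv0 hn 0 R i k = 0 := by
  unfold eN
  rw [show allocF v hv0 hn 0 R = fun _ => (∅ : Finset (Fin m)) from rfl]
  simp

lemma eN_empty (N : ℕ) (R : Finset (Fin m)) (hR : ¬ R.Nonempty) (i k : Fin n) :
    eN v hv0 hn (N+1) R i k = 0 := by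
  unfold eN
  have : allocF v hv0 hn (N+1) R = fun _ => (∅ : Finset (Fin m)) := by
    funext i'; rw [allocF, if_neg hR]
  rw [this]
  simp

/-- Main induction: (A) cycles are nonpositive; (B) paths are bounded by the value
of the last agent's first-phase item. -/
lemma lemAB (N : ℕ) : ∀ (R : Finset (Fin m)) (L : List (Fin n)) (a : Fin n),
    (a :: L).Nodup →
    pW (eN v hv0 hn N R) ((a :: L) ++ [a]) ≤ 0 ∧
    pW (eN v hv0 hn N R) (a :: L)
      ≤ oval v ((a :: L).getLast (by simp)) (phF v hv0 hn R ((a :: L).getLast (by simp))) := by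
  induction N with
  | zero =>
    intro R L a hnd
    constructor
    · rw [pW_congr (fun i k => eN_zero_fuel v hv0 hn R i k) _, pW_zero]
    · rw [pW_congr (fun i k => eN_zero_fuel v hv0 hn R i k) _, pW_zero]
      exact oval_nonneg hv0 _ _
  | succ N ih =>
    intro R L a hnd
    by_cases hR : R.Nonempty
    · set f := phF v hv0 hn R with hfdef
      set R' := R \ mset f with hR'def
      have hE : ∀ i k, eN v hv0 hn (N+1) R i k
          = (oval v i (f k) - oval v i (f i)) + eN v hv0 hn N R' i k :=
        fun i k => eN_decomp v hv0 hn N R hR i k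
      have hsplit : ∀ M, pW (eN v hv0 hn (N+1) R) M
          = pW (fun i k => oval v i (f k) - oval v i (f i)) M + pW (eN v hv0 hn N R') M := by
        intro M
        rw [pW_congr hE M, pW_add]
      obtain ⟨ihA, ihB⟩ := ih R' L a hnd
      constructor
      · rw [hsplit]
        have h1 := cyc_bound v hv0 hn R L a hnd
        linarith
      · rw [hsplit]
        set ℓ := (a :: L).getLast (by simp) with hldef
        have h1 : pW (fun i k => oval v i (f k) - oval v i (f i)) (a :: L)
            ≤ oval v ℓ (f ℓ) - oval v ℓ (phF v hv0 hn R' ℓ) := by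
          apply path_bound v hv0 hn R L a hnd (phF v hv0 hn R' ℓ)
          · intro j hj
            have := (phF_matching v hv0 hn R').1 ℓ j hj
            rw [hR'def, Finset.mem_sdiff] at this
            exact this.1
          · intro j hj y hy
            have := (phF_matching v hv0 hn R').1 ℓ j hj
            rw [hR'def, Finset.mem_sdiff] at this
            exact this.2 (mem_mset.mpr ⟨y, hy⟩)
        linarith
    · have hE : ∀ i k, eN v hv0 hn (N+1) R i k = 0 := eN_empty v hv0 hn N R hR
      constructor
      · rw [pW_congr hE, pW_zero]
      · rw [pW_congr hE, pW_zero]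
        exact oval_nonneg hv0 _ _

end Main
end SubsidyProof

namespace SubsidyProof

theorem main (n m : ℕ) (hn : 1 ≤ n)
    (v : Fin n → Fin m → ℝ)
    (hv0 : ∀ i j, 0 ≤ v i j) (hv1 : ∀ i j, v i j ≤ 1) :
    ∃ (A : Fin n → Finset (Fin m)) (p : Fin n → ℝ),
      (∀ i k, i ≠ k → Disjoint (A i) (A k)) ∧
      (Finset.univ.biUnion A = Finset.univ) ∧
      (∀ i, 0 ≤ p i) ∧
      (∀ i k : Fin n, (∑ j ∈ A i, v i j) + p i ≥ (∑ j ∈ A k, v i j) + p k) ∧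
      (∑ i, p i) ≤ (n : ℝ) - 1 := by
  classical
  have hn0 : 0 < n := hn
  set A : Fin n → Finset (Fin m) := allocF v hv0 hn0 m Finset.univ with hA
  set E : Fin n → Fin n → ℝ := eN v hv0 hn0 m Finset.univ with hE
  have hEdef : ∀ i k, E i k = (∑ j ∈ A k, v i j) - (∑ j ∈ A i, v i j) := fun i k => rfl
  -- path facts
  have cycA : ∀ (L : List (Fin n)) (a : Fin n), (a :: L).Nodup →
      pW E ((a :: L) ++ [a]) ≤ 0 :=
    fun L a hnd => (lemAB v hv0 hn0 m Finset.univ L a hnd).1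
  have pathB : ∀ (L : List (Fin n)) (a : Fin n), (a :: L).Nodup →
      pW E (a :: L) ≤ 1 := by
    intro L a hnd
    exact le_trans (lemAB v hv0 hn0 m Finset.univ L a hnd).2 (oval_le_one hv1 _ _)
  -- payments
  set S : Fin n → Set ℝ := fun i => {w | ∃ L : List (Fin n), (i :: L).Nodup ∧ pW E (i :: L) = w}
    with hS
  have hSne : ∀ i, (S i).Nonempty := by
    intro i
    exact ⟨0, ⟨[], by simp, pW_single E i⟩⟩
  have hSbdd : ∀ i, BddAbove (S i) := by
    intro i
    refine ⟨1, ?_⟩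
    rintro w ⟨L, hnd, rfl⟩
    exact pathB L i hnd
  set q : Fin n → ℝ := fun i => sSup (S i) with hq
  have hq1 : ∀ i, q i ≤ 1 := by
    intro i
    apply csSup_le (hSne i)
    rintro w ⟨L, hnd, rfl⟩
    exact pathB L i hnd
  have hq0 : ∀ i, 0 ≤ q i := by
    intro i
    exact le_csSup (hSbdd i) ⟨[], by simp, pW_single E i⟩
  have hkey : ∀ i k, E i k + q k ≤ q i := by
    intro i k
    by_cases hik : i = k
    · subst hik
      have : E i i = 0 := by rw [hEdef]; ring
      rw [this]; linarith
    · have : q k ≤ q i - E i k := by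
        apply csSup_le (hSne k)
        rintro w ⟨L, hnd, rfl⟩
        by_cases hmem : i ∈ k :: L
        · obtain ⟨X, Y, hXY⟩ := List.append_of_mem hmem
          have hndXY : (X ++ i :: Y).Nodup := hXY ▸ hnd
          have hXnd : X.Nodup := (List.nodup_append.mp hndXY).1
          have hiY : (i :: Y).Nodup := (List.nodup_append.mp hndXY).2.1
          have hiX : i ∉ X := by
            intro hw
            have := (List.nodup_append.mp hndXY).2.2
            exact this i hw i List.mem_cons_self rfl
          have hiXnd : (i :: X).Nodup := List.nodup_cons.mpr ⟨hiX, hXnd⟩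
          have hsplit : pW E (i :: (k :: L)) = pW E ((i :: X) ++ [i]) + pW E (i :: Y) := by
            rw [hXY, show i :: (X ++ i :: Y) = (i :: X) ++ i :: Y from rfl, pW_split]
          have h1 : pW E ((i :: X) ++ [i]) ≤ 0 := cycA X i hiXnd
          have h2 : pW E (i :: Y) ≤ q i := le_csSup (hSbdd i) ⟨Y, hiY, rfl⟩
          have h3 : pW E (i :: (k :: L)) = E i k + pW E (k :: L) := pW_cons E i k L
          linarith
        · have hnd' : (i :: k :: L).Nodup := List.nodup_cons.mpr ⟨hmem, hnd⟩
          have : pW E (i :: k :: L) ≤ q i := le_csSup (hSbdd i) ⟨k :: L, hnd', rfl⟩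
          rw [pW_cons] at this
          linarith
      linarith
  -- pick the minimizer
  obtain ⟨i₀, -, hi₀⟩ := Finset.exists_min_image Finset.univ q
    ⟨⟨0, hn0⟩, Finset.mem_univ _⟩
  set p : Fin n → ℝ := fun i => q i - q i₀ with hp
  refine ⟨A, p, ?_, ?_, ?_, ?_, ?_⟩
  · intro i k hik
    exact allocF_disjoint v hv0 hn0 m Finset.univ i k hik
  · apply allocF_cover v hv0 hn0 m Finset.univ
    simp
  · intro i
    have := hi₀ i (Finset.mem_univ i)
    simp only [hp]
    linarith
  · intro i k
    have := hkey i k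
    rw [hEdef] at this
    simp only [hp, ge_iff_le]
    linarith
  · have hsum : ∑ i, p i = ∑ i ∈ Finset.univ.erase i₀, p i := by
      rw [← Finset.add_sum_erase _ p (Finset.mem_univ i₀)]
      simp [hp]
    rw [hsum]
    have hb : ∀ i ∈ Finset.univ.erase i₀, p i ≤ 1 := by
      intro i _
      simp only [hp]
      have := hq1 i
      have := hq0 i₀
      linarith
    have := Finset.sum_le_card_nsmul (Finset.univ.erase i₀) p 1 hb
    have hcard : (Finset.univ.erase i₀).card = n - 1 := by
      rw [Finset.card_erase_of_mem (Finset.mem_univ i₀)]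
      simp
    rw [hcard] at this
    calc ∑ i ∈ Finset.univ.erase i₀, p i ≤ (n - 1) • (1:ℝ) := this
      _ = ((n - 1 : ℕ) : ℝ) := by rw [nsmul_eq_mul, mul_one]
      _ ≤ (n : ℝ) - 1 := by
          rw [Nat.cast_sub hn]
          simp

end SubsidyProof


/-- For n ≥ 1 agents with additive valuations whose item values lie in
[0,1], there exists an allocation A and a payment vector p such that (A, p) is
envy-free and the total subsidy is at most n − 1. -/
theorem total_subsidy_at_most_n_sub_one
    (n m : ℕ) (hn : 1 ≤ n)
    (v : Fin n → Fin m → ℝ)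
    (hv0 : ∀ i j, 0 ≤ v i j) (hv1 : ∀ i j, v i j ≤ 1) :
    ∃ (A : Fin n → Finset (Fin m)) (p : Fin n → ℝ),
      (∀ i k, i ≠ k → Disjoint (A i) (A k)) ∧
      (Finset.univ.biUnion A = Finset.univ) ∧
      (∀ i, 0 ≤ p i) ∧
      (∀ i k : Fin n, (∑ j ∈ A i, v i j) + p i ≥ (∑ j ∈ A k, v i j) + p k) ∧
      (∑ i, p i) ≤ (n : ℝ) - 1 := by
  exact SubsidyProof.main n m hn v hv0 hv1
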